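/- arXiv:1906.11101 — 6 statements merged into one kernel-verified Lean document; each statement's English description precedes it below -/
import Mathlib

section
/- For every ε > 0, ξ ∈ ℝ and t ∈ ℝ, the matrix exponential of the free Dirac symbol decomposes as exp((it/ε²)·Q_ε(ξ)) = e^{it/ε²}·e^{it·d_ε(ξ)}·Π₊^ε(ξ) + e^{−it/ε²}·e^{−it·d_ε(ξ)}·Π₋^ε(ξ). -/
open Matrix

noncomputable section

/-- The Pauli matrix σ₁. -/
def pauli1 : Matrix (Fin 2) (Fin 2) ℂ := !![0, 1; 1, 0]

/-- The Pauli matrix σ₃. -/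
def pauli3 : Matrix (Fin 2) (Fin 2) ℂ := !![1, 0; 0, -1]

/-- The free Dirac symbol Q_ε(ξ) = εξσ₁ + σ₃. -/
def diracSymbol (ε ξ : ℝ) : Matrix (Fin 2) (Fin 2) ℂ :=
  ((ε * ξ : ℝ) : ℂ) • pauli1 + pauli3

/-- The projection symbol Π₊^ε(ξ) = (1/2)(I₂ + (1+ε²ξ²)^{-1/2} Q_ε(ξ)). -/
def projPlus (ε ξ : ℝ) : Matrix (Fin 2) (Fin 2) ℂ :=
  (1 / 2 : ℂ) • ((1 : Matrix (Fin 2) (Fin 2) ℂ)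
    + (((Real.sqrt (1 + ε ^ 2 * ξ ^ 2))⁻¹ : ℝ) : ℂ) • diracSymbol ε ξ)

/-- The projection symbol Π₋^ε(ξ) = (1/2)(I₂ − (1+ε²ξ²)^{-1/2} Q_ε(ξ)). -/
def projMinus (ε ξ : ℝ) : Matrix (Fin 2) (Fin 2) ℂ :=
  (1 / 2 : ℂ) • ((1 : Matrix (Fin 2) (Fin 2) ℂ)
    - (((Real.sqrt (1 + ε ^ 2 * ξ ^ 2))⁻¹ : ℝ) : ℂ) • diracSymbol ε ξ)


/-- The rescaled dispersion symbol d_ε(ξ) = (√(1+ε²ξ²) − 1)/ε². -/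
def dispSymbol (ε ξ : ℝ) : ℝ := (Real.sqrt (1 + ε ^ 2 * ξ ^ 2) - 1) / ε ^ 2

/-- Exponential of a scalar multiple of an idempotent. -/
lemma exp_smul_of_idem {𝔸 : Type*} [NormedRing 𝔸] [NormedAlgebra ℂ 𝔸] [CompleteSpace 𝔸]
    (a : ℂ) (P : 𝔸) (hP : P * P = P) :
    NormedSpace.exp (a • P) = 1 + (Complex.exp a - 1) • P := by
  have hc : Summable fun n : ℕ => ((n.factorial : ℂ))⁻¹ * a ^ n := by
    simpa [smul_eq_mul] using NormedSpace.expSeries_summable' (𝕂 := ℂ) a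
  have hsum : (∑' n : ℕ, ((n.factorial : ℂ))⁻¹ * a ^ n) = Complex.exp a := by
    rw [Complex.exp_eq_exp_ℂ, NormedSpace.exp_eq_tsum ℂ]
    simp [smul_eq_mul]
  have hterm : ∀ n : ℕ, ((n.factorial : ℂ))⁻¹ • (a • P) ^ n
      = (((n.factorial : ℂ))⁻¹ * a ^ n) • P + (if n = 0 then (1 : 𝔸) - P else 0) := by
    intro n
    cases n with
    | zero => norm_num
    | succ n =>
      have hPn : P ^ (n + 1) = P := by
        induction n with
        | zero => simp
        | succ m ih => rw [pow_succ, ih, hP]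
      simp [smul_pow, hPn, smul_smul]
  rw [NormedSpace.exp_eq_tsum ℂ]
  calc (∑' n : ℕ, ((n.factorial : ℂ))⁻¹ • (a • P) ^ n)
      = ∑' n : ℕ, ((((n.factorial : ℂ))⁻¹ * a ^ n) • P + (if n = 0 then (1 : 𝔸) - P else 0)) := by
        exact tsum_congr hterm
    _ = (∑' n : ℕ, (((n.factorial : ℂ))⁻¹ * a ^ n) • P)
          + ∑' n : ℕ, (if n = 0 then (1 : 𝔸) - P else 0) := by
        exact Summable.tsum_add (hc.smul_const P) ((hasSum_ite_eq 0 ((1 : 𝔸) - P)).summable)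
    _ = (∑' n : ℕ, ((n.factorial : ℂ))⁻¹ * a ^ n) • P + ((1 : 𝔸) - P) := by
        rw [Summable.tsum_smul_const hc, tsum_ite_eq]
    _ = 1 + (Complex.exp a - 1) • P := by
        rw [hsum]; module

/-- decomposition of the matrix exponential of the free Dirac symbol,
exp((it/ε²)Q_ε(ξ)) = e^{it/ε²} e^{it d_ε(ξ)} Π₊^ε(ξ) + e^{−it/ε²} e^{−it d_ε(ξ)} Π₋^ε(ξ). -/
theorem exp_diracSymbol_decomposition (ε ξ t : ℝ) (hε : 0 < ε) :
    NormedSpace.exp ((Complex.I * (t : ℂ) / ((ε : ℂ)) ^ 2) • diracSymbol ε ξ)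
      = (Complex.exp (Complex.I * (t : ℂ) / ((ε : ℂ)) ^ 2)
          * Complex.exp (Complex.I * (t : ℂ) * ((dispSymbol ε ξ : ℝ) : ℂ))) • projPlus ε ξ
        + (Complex.exp (-(Complex.I * (t : ℂ) / ((ε : ℂ)) ^ 2))
          * Complex.exp (-(Complex.I * (t : ℂ) * ((dispSymbol ε ξ : ℝ) : ℂ)))) • projMinus ε ξ := by
  letI : SeminormedRing (Matrix (Fin 2) (Fin 2) ℂ) := Matrix.linftyOpSemiNormedRing
  letI : NormedRing (Matrix (Fin 2) (Fin 2) ℂ) := Matrix.linftyOpNormedRing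
  letI : NormedAlgebra ℂ (Matrix (Fin 2) (Fin 2) ℂ) := Matrix.linftyOpNormedAlgebra
  have h1 : (0 : ℝ) < 1 + ε ^ 2 * ξ ^ 2 := by positivity
  set s : ℝ := Real.sqrt (1 + ε ^ 2 * ξ ^ 2) with hs_def
  have hs0 : 0 < s := Real.sqrt_pos.mpr h1
  have hs2 : s ^ 2 = 1 + ε ^ 2 * ξ ^ 2 := Real.sq_sqrt h1.le
  have hεC : ((ε : ℂ)) ≠ 0 := by exact_mod_cast (Complex.ofReal_ne_zero.mpr hε.ne')
  -- the normalized Dirac symbol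
  set u : Matrix (Fin 2) (Fin 2) ℂ := ((s⁻¹ : ℝ) : ℂ) • diracSymbol ε ξ with hu_def
  have hQ2 : diracSymbol ε ξ * diracSymbol ε ξ = ((1 + ε ^ 2 * ξ ^ 2 : ℝ) : ℂ) • 1 := by
    ext i j
    fin_cases i <;> fin_cases j <;>
      simp [diracSymbol, pauli1, pauli3, Matrix.mul_apply, Fin.sum_univ_two,
        Matrix.one_apply] <;> push_cast <;> ring
  have huu : u * u = 1 := by
    rw [hu_def, smul_mul_assoc, mul_smul_comm, smul_smul, hQ2, smul_smul]
    have hr : (s⁻¹ * s⁻¹ * (1 + ε ^ 2 * ξ ^ 2) : ℝ) = 1 := by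
      rw [← hs2]; field_simp
    have : (((s⁻¹ : ℝ) : ℂ)) * (((s⁻¹ : ℝ) : ℂ)) * (((1 + ε ^ 2 * ξ ^ 2 : ℝ)) : ℂ) = 1 := by
      exact_mod_cast congrArg (fun x : ℝ => (x : ℂ)) hr
    rw [this, one_smul]
  have hPdef : projPlus ε ξ = (1 / 2 : ℂ) • (1 + u) := rfl
  have hMdef : projMinus ε ξ = (1 / 2 : ℂ) • (1 - u) := rfl
  set P := projPlus ε ξ
  set M := projMinus ε ξ
  have hPP : P * P = P := by
    rw [hPdef]
    simp only [smul_mul_assoc, mul_smul_comm, smul_smul, add_mul, mul_add, sub_mul, mul_sub,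
      one_mul, mul_one, huu]
    module
  have hMM : M * M = M := by
    rw [hMdef]
    simp only [smul_mul_assoc, mul_smul_comm, smul_smul, add_mul, mul_add, sub_mul, mul_sub,
      one_mul, mul_one, huu]
    module
  have hPM : P * M = 0 := by
    rw [hPdef, hMdef]
    simp only [smul_mul_assoc, mul_smul_comm, smul_smul, add_mul, mul_add, sub_mul, mul_sub,
      one_mul, mul_one, huu]
    module
  have hMP : M * P = 0 := by
    rw [hPdef, hMdef]
    simp only [smul_mul_assoc, mul_smul_comm, smul_smul, add_mul, mul_add, sub_mul, mul_sub,
      one_mul, mul_one, huu]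
    module
  have hPMsum : P + M = 1 := by
    rw [hPdef, hMdef]; module
  have hQu : diracSymbol ε ξ = ((s : ℝ) : ℂ) • u := by
    rw [hu_def, smul_smul]
    have : (((s : ℝ) : ℂ)) * (((s⁻¹ : ℝ) : ℂ)) = 1 := by
      have : (s * s⁻¹ : ℝ) = 1 := by field_simp
      exact_mod_cast congrArg (fun x : ℝ => (x : ℂ)) this
    rw [this, one_smul]
  set c : ℂ := Complex.I * (t : ℂ) / ((ε : ℂ)) ^ 2 with hc_def
  set b : ℂ := c * ((s : ℝ) : ℂ) with hb_def
  have huPM : u = P - M := by rw [hPdef, hMdef]; module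
  have hsplit : c • diracSymbol ε ξ = b • P + (-b) • M := by
    rw [hQu, huPM, smul_smul, ← hb_def, smul_sub]
    module
  have hcomm : Commute (b • P) ((-b) • M) := by
    show _ * _ = _ * _
    rw [smul_mul_assoc, mul_smul_comm, hPM, smul_mul_assoc, mul_smul_comm, hMP]
    simp
  rw [hsplit, Matrix.exp_add_of_commute _ _ hcomm]
  erw [exp_smul_of_idem b P hPP, exp_smul_of_idem (-b) M hMM]
  have hexpand : (1 + (Complex.exp b - 1) • P) * (1 + (Complex.exp (-b) - 1) • M)
      = Complex.exp b • P + Complex.exp (-b) • M := by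
    simp only [mul_add, add_mul, one_mul, mul_one, smul_mul_assoc, mul_smul_comm, hPM,
      smul_zero, add_zero]
    rw [← hPMsum]
    module
  rw [hexpand]
  have hd : ((dispSymbol ε ξ : ℝ) : ℂ) = (((s : ℝ) : ℂ) - 1) / ((ε : ℂ)) ^ 2 := by
    rw [dispSymbol, ← hs_def]; push_cast; ring
  have hb1 : Complex.exp c * Complex.exp (Complex.I * (t : ℂ) * ((dispSymbol ε ξ : ℝ) : ℂ))
      = Complex.exp b := by
    rw [← Complex.exp_add, hd, hb_def, hc_def]
    congr 1
    field_simp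
    ring
  have hb2 : Complex.exp (-c) * Complex.exp (-(Complex.I * (t : ℂ) * ((dispSymbol ε ξ : ℝ) : ℂ)))
      = Complex.exp (-b) := by
    rw [← Complex.exp_add, hd, hb_def, hc_def]
    congr 1
    field_simp
    ring
  rw [← hb1, ← hb2]
end
end

section
/- For every ε > 0 and every ξ ∈ ℝ, the projection symbols are ε|ξ|-close to the constant diagonal projections: ‖Π₊^ε(ξ) − Π₊⁰‖ ≤ ε|ξ| and ‖Π₋^ε(ξ) − Π₋⁰‖ ≤ ε|ξ|, where ‖·‖ is the operator norm on M₂(ℂ), Π₊⁰ = diag(1,0) and Π₋⁰ = diag(0,1). -/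
open Matrix
open scoped Matrix.Norms.L2Operator

noncomputable section

/-- The limiting diagonal projection Π₊⁰ = diag(1,0). -/
def projPlus0 : Matrix (Fin 2) (Fin 2) ℂ := !![1, 0; 0, 0]

/-- The limiting diagonal projection Π₋⁰ = diag(0,1). -/
def projMinus0 : Matrix (Fin 2) (Fin 2) ℂ := !![0, 0; 0, 1]

set_option linter.unreachableTactic false
set_option linter.unusedTactic false


lemma my_norm_one : ‖(1 : Matrix (Fin 2) (Fin 2) ℂ)‖ = 1 := by
  rw [Matrix.cstar_norm_def, _root_.map_one, norm_one]

lemma sq_eq_one_norm {A : Matrix (Fin 2) (Fin 2) ℂ} (h : Aᴴ * A = 1) : ‖A‖ = 1 := by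
  have h2 := Matrix.l2_opNorm_conjTranspose_mul_self A
  rw [h, my_norm_one] at h2
  nlinarith [norm_nonneg A]

lemma norm_pauli1 : ‖pauli1‖ = 1 := by
  apply sq_eq_one_norm
  ext i j
  fin_cases i <;> fin_cases j <;> simp [pauli1, Matrix.mul_apply, Fin.sum_univ_two, Matrix.one_apply]

lemma norm_pauli3 : ‖pauli3‖ = 1 := by
  apply sq_eq_one_norm
  ext i j
  fin_cases i <;> fin_cases j <;> simp [pauli3, Matrix.mul_apply, Fin.sum_univ_two, Matrix.one_apply]

/-- in the l² operator norm on M₂(ℂ), the projection symbols are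
ε|ξ|-close to the limiting diagonal projections: ‖Π₊^ε(ξ) − Π₊⁰‖ ≤ ε|ξ| and
‖Π₋^ε(ξ) − Π₋⁰‖ ≤ ε|ξ|. -/
theorem proj_symbols_close_to_diagonal (ε ξ : ℝ) (hε : 0 < ε) :
    ‖projPlus ε ξ - projPlus0‖ ≤ ε * |ξ| ∧
    ‖projMinus ε ξ - projMinus0‖ ≤ ε * |ξ| := by
  set s : ℝ := (Real.sqrt (1 + ε ^ 2 * ξ ^ 2))⁻¹ with hs
  set a : ℝ := ε * ξ with ha
  have hdecomp : projPlus ε ξ - projPlus0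
      = ((s * a / 2 : ℝ) : ℂ) • pauli1 + (((s - 1) / 2 : ℝ) : ℂ) • pauli3 := by
    ext i j
    fin_cases i <;> fin_cases j <;>
      simp [projPlus, projPlus0, diracSymbol, pauli1, pauli3, Matrix.one_apply, hs, ha] <;>
      push_cast <;> ring_nf <;> norm_cast <;> ring
  have hdecomp2 : projMinus ε ξ - projMinus0 = -(projPlus ε ξ - projPlus0) := by
    ext i j
    fin_cases i <;> fin_cases j <;>
      simp [projPlus, projMinus, projPlus0, projMinus0, diracSymbol, pauli1, pauli3,
        Matrix.one_apply] <;> push_cast <;> ring_nf <;> norm_cast <;> ring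
  have ht : (1 : ℝ) ≤ Real.sqrt (1 + ε ^ 2 * ξ ^ 2) := by
    have h' : (1:ℝ) ≤ 1 + ε ^ 2 * ξ ^ 2 := by nlinarith [sq_nonneg (ε*ξ)]
    calc (1:ℝ) = Real.sqrt 1 := by simp
      _ ≤ _ := Real.sqrt_le_sqrt h'
  have ht0 : (0 : ℝ) < Real.sqrt (1 + ε ^ 2 * ξ ^ 2) := lt_of_lt_of_le one_pos ht
  have htsq : Real.sqrt (1 + ε ^ 2 * ξ ^ 2) ^ 2 = 1 + ε ^ 2 * ξ ^ 2 :=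
    Real.sq_sqrt (by positivity : (0:ℝ) ≤ 1 + ε ^ 2 * ξ ^ 2)
  have hs1 : s ≤ 1 := by rw [hs]; exact inv_le_one_of_one_le₀ ht
  have hs0 : 0 < s := by rw [hs]; exact inv_pos.mpr ht0
  have haeq : |a| = ε * |ξ| := by rw [ha, abs_mul, abs_of_pos hε]
  have key : ‖projPlus ε ξ - projPlus0‖ ≤ ε * |ξ| := by
    rw [hdecomp]
    calc ‖((s * a / 2 : ℝ) : ℂ) • pauli1 + (((s - 1) / 2 : ℝ) : ℂ) • pauli3‖
        ≤ ‖((s * a / 2 : ℝ) : ℂ) • pauli1‖ + ‖(((s - 1) / 2 : ℝ) : ℂ) • pauli3‖ :=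
          norm_add_le _ _
      _ = |s * a / 2| + |(s - 1) / 2| := by
          rw [norm_smul, norm_smul, norm_pauli1, norm_pauli3, Complex.norm_real,
            Complex.norm_real, Real.norm_eq_abs, Real.norm_eq_abs, mul_one, mul_one]
      _ ≤ ε * |ξ| := by
          rw [← haeq]
          have h1 : |s * a / 2| = s * |a| / 2 := by
            rw [abs_div, abs_mul, abs_of_pos hs0]; simp
          have h2 : |(s - 1) / 2| = (1 - s) / 2 := by
            rw [abs_div, abs_of_nonpos (by linarith)]; norm_num
          rw [h1, h2]
          set t := Real.sqrt (1 + ε ^ 2 * ξ ^ 2) with hts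
          have hsa : s = t⁻¹ := hs
          have hta : t ^ 2 = 1 + a ^ 2 := by rw [htsq, ha]; ring
          have ht1 : t ≤ 1 + |a| := by nlinarith [abs_nonneg a, sq_abs a]
          have h1s : 1 - s ≤ |a| := by
            rw [hsa, show 1 - t⁻¹ = (t - 1) / t by field_simp, div_le_iff₀ ht0]
            nlinarith [ht1, mul_nonneg (abs_nonneg a) (sub_nonneg.mpr ht)]
          have hsa2 : s * |a| ≤ |a| := by nlinarith [abs_nonneg a]
          linarith
  exact ⟨key, by rw [hdecomp2, norm_neg]; exact key⟩
end
end

section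
/- For every ε > 0 and every ξ ∈ ℝ, the second-order expansion of the projection symbols holds with a uniform quadratic remainder: ‖Π₊^ε(ξ) − Π₊⁰ − (εξ/2)σ₁‖ ≤ ε²ξ² and ‖Π₋^ε(ξ) − Π₋⁰ + (εξ/2)σ₁‖ ≤ ε²ξ², where ‖·‖ is the operator norm on M₂(ℂ), Π₊⁰ = diag(1,0) and Π₋⁰ = diag(0,1). -/
open Matrix
open scoped Matrix.Norms.L2Operator

noncomputable section

lemma dirac_sq (ε ξ : ℝ) :
    (diracSymbol ε ξ)ᴴ * diracSymbol ε ξ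
      = ((1 + ε ^ 2 * ξ ^ 2 : ℝ) : ℂ) • (1 : Matrix (Fin 2) (Fin 2) ℂ) := by
  ext i j
  fin_cases i <;> fin_cases j <;>
    simp [diracSymbol, pauli1, pauli3, Matrix.mul_apply, Fin.sum_univ_two,
      Matrix.one_apply] <;> ring

lemma dirac_norm (ε ξ : ℝ) :
    ‖diracSymbol ε ξ‖ = Real.sqrt (1 + ε ^ 2 * ξ ^ 2) := by
  have h := Matrix.l2_opNorm_conjTranspose_mul_self (diracSymbol ε ξ)
  rw [dirac_sq] at h
  have h1 : ‖(1 : Matrix (Fin 2) (Fin 2) ℂ)‖ = 1 := norm_one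
  rw [norm_smul, h1, mul_one] at h
  have ht : (0:ℝ) ≤ 1 + ε ^ 2 * ξ ^ 2 := by positivity
  rw [Complex.norm_real, Real.norm_eq_abs, abs_of_nonneg ht] at h
  rw [← Real.sqrt_mul_self (norm_nonneg (diracSymbol ε ξ)), h]

lemma plus_eq (ε ξ : ℝ) :
    projPlus ε ξ - projPlus0 - ((ε * ξ / 2 : ℝ) : ℂ) • pauli1
      = ((((Real.sqrt (1 + ε ^ 2 * ξ ^ 2))⁻¹ - 1) / 2 : ℝ) : ℂ) • diracSymbol ε ξ := by
  ext i j
  fin_cases i <;> fin_cases j <;>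
    · simp [projPlus, projPlus0, pauli1, pauli3, diracSymbol, Matrix.one_apply]
      push_cast
      ring

lemma minus_eq (ε ξ : ℝ) :
    projMinus ε ξ - projMinus0 + ((ε * ξ / 2 : ℝ) : ℂ) • pauli1
      = (((1 - (Real.sqrt (1 + ε ^ 2 * ξ ^ 2))⁻¹) / 2 : ℝ) : ℂ) • diracSymbol ε ξ := by
  ext i j
  fin_cases i <;> fin_cases j <;>
    · simp [projMinus, projMinus0, pauli1, pauli3, diracSymbol, Matrix.one_apply]
      push_cast
      ring

lemma key_bound (ε ξ : ℝ) :
    |1 - (Real.sqrt (1 + ε ^ 2 * ξ ^ 2))⁻¹| / 2 * Real.sqrt (1 + ε ^ 2 * ξ ^ 2)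
      ≤ ε ^ 2 * ξ ^ 2 := by
  set t := ε ^ 2 * ξ ^ 2 with htd
  have ht : (0:ℝ) ≤ t := by positivity
  set r := Real.sqrt (1 + t) with hrd
  have hr1 : 1 ≤ r := by
    rw [hrd]
    nlinarith [Real.sq_sqrt (show (0:ℝ) ≤ 1 + t by linarith),
      Real.sqrt_nonneg (1 + t)]
  have hr0 : 0 < r := by linarith
  have hs : (Real.sqrt (1 + t))⁻¹ ≤ 1 := by
    rw [← hrd]; exact inv_le_one_of_one_le₀ hr1
  have habs : |1 - (Real.sqrt (1 + t))⁻¹| = 1 - r⁻¹ := by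
    rw [abs_of_nonneg (by linarith), hrd]
  rw [habs]
  have hrr : r ≤ 1 + t := by
    rw [hrd]
    calc Real.sqrt (1 + t) ≤ Real.sqrt ((1 + t) ^ 2) := by
          apply Real.sqrt_le_sqrt; nlinarith
      _ = 1 + t := by rw [Real.sqrt_sq (by linarith)]
  have : (1 - r⁻¹) / 2 * r = (r - 1) / 2 := by field_simp
  rw [this]
  linarith

/-- second-order expansion of the projection symbols with uniform
quadratic remainder, in the l² operator norm on M₂(ℂ):
‖Π₊^ε(ξ) − Π₊⁰ − (εξ/2)σ₁‖ ≤ ε²ξ² and ‖Π₋^ε(ξ) − Π₋⁰ + (εξ/2)σ₁‖ ≤ ε²ξ². -/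
theorem proj_symbols_second_order_expansion (ε ξ : ℝ) (hε : 0 < ε) :
    ‖projPlus ε ξ - projPlus0 - ((ε * ξ / 2 : ℝ) : ℂ) • pauli1‖ ≤ ε ^ 2 * ξ ^ 2 ∧
    ‖projMinus ε ξ - projMinus0 + ((ε * ξ / 2 : ℝ) : ℂ) • pauli1‖ ≤ ε ^ 2 * ξ ^ 2 := by
  have key := key_bound ε ξ
  constructor
  · rw [plus_eq, norm_smul, Complex.norm_real, Real.norm_eq_abs, dirac_norm]
    calc |((Real.sqrt (1 + ε ^ 2 * ξ ^ 2))⁻¹ - 1) / 2| * Real.sqrt (1 + ε ^ 2 * ξ ^ 2)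
        = |1 - (Real.sqrt (1 + ε ^ 2 * ξ ^ 2))⁻¹| / 2 * Real.sqrt (1 + ε ^ 2 * ξ ^ 2) := by
          rw [abs_div, abs_sub_comm]; norm_num
      _ ≤ ε ^ 2 * ξ ^ 2 := key
  · rw [minus_eq, norm_smul, Complex.norm_real, Real.norm_eq_abs, dirac_norm]
    calc |(1 - (Real.sqrt (1 + ε ^ 2 * ξ ^ 2))⁻¹) / 2| * Real.sqrt (1 + ε ^ 2 * ξ ^ 2)
        = |1 - (Real.sqrt (1 + ε ^ 2 * ξ ^ 2))⁻¹| / 2 * Real.sqrt (1 + ε ^ 2 * ξ ^ 2) := by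
          rw [abs_div]; norm_num
      _ ≤ ε ^ 2 * ξ ^ 2 := key
end
end

section
/- Exact solvability of the nonlinear substep of the splitting scheme: for all λ₁, λ₂ ∈ ℝ, V ∈ ℝ and Φ₀ ∈ ℂ², the function Φ(t) = exp(−it(V·I₂ + F(Φ₀)))·Φ₀ satisfies F(Φ(t)) = F(Φ₀) and |Φ(t)| = |Φ₀| for all t ∈ ℝ, and it solves the ODE i·Φ'(t) = (V·I₂ + F(Φ(t)))·Φ(t) with Φ(0) = Φ₀. -/
open Matrix

noncomputable section

/-- The cubic nonlinearity F(Φ) = λ₁(Φ*σ₃Φ)σ₃ + λ₂|Φ|²I₂, written with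
Φ*MΨ = star Φ ⬝ᵥ M.mulVec Ψ. -/
def Fnl (l1 l2 : ℝ) (Φ : Fin 2 → ℂ) : Matrix (Fin 2) (Fin 2) ℂ :=
  ((l1 : ℂ) * (star Φ ⬝ᵥ pauli3.mulVec Φ)) • pauli3
    + ((l2 : ℂ) * (star Φ ⬝ᵥ Φ)) • (1 : Matrix (Fin 2) (Fin 2) ℂ)

/-- g₁(Φ₊,Φ₋) = λ₁(Φ₋*σ₃Φ₊)σ₃ + λ₂(Φ₋*Φ₊)I₂. -/
def gOsc (l1 l2 : ℝ) (Φp Φm : Fin 2 → ℂ) : Matrix (Fin 2) (Fin 2) ℂ :=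
  ((l1 : ℂ) * (star Φm ⬝ᵥ pauli3.mulVec Φp)) • pauli3
    + ((l2 : ℂ) * (star Φm ⬝ᵥ Φp)) • (1 : Matrix (Fin 2) (Fin 2) ℂ)

/-- g₂(Φ₊,Φ₋) = λ₁(Φ₊*σ₃Φ₊ + Φ₋*σ₃Φ₋)σ₃ + λ₂(|Φ₊|² + |Φ₋|²)I₂. -/
def gNonOsc (l1 l2 : ℝ) (Φp Φm : Fin 2 → ℂ) : Matrix (Fin 2) (Fin 2) ℂ :=
  ((l1 : ℂ) * (star Φp ⬝ᵥ pauli3.mulVec Φp + star Φm ⬝ᵥ pauli3.mulVec Φm)) • pauli3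
    + ((l2 : ℂ) * (star Φp ⬝ᵥ Φp + star Φm ⬝ᵥ Φm)) • (1 : Matrix (Fin 2) (Fin 2) ℂ)

/-- The Euclidean norm on ℂ². -/
def eucNorm (Φ : Fin 2 → ℂ) : ℝ := Real.sqrt (‖Φ 0‖ ^ 2 + ‖Φ 1‖ ^ 2)

/-- The exact flow of the nonlinear substep, Φ(t) = exp(−it(V·I₂ + F(Φ₀)))Φ₀. -/
def substepFlow (l1 l2 V : ℝ) (Φ₀ : Fin 2 → ℂ) (t : ℝ) : Fin 2 → ℂ :=
  (NormedSpace.exp ((-(Complex.I * (t : ℂ))) •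
      ((V : ℂ) • (1 : Matrix (Fin 2) (Fin 2) ℂ) + Fnl l1 l2 Φ₀))).mulVec Φ₀

def rv (l1 l2 V : ℝ) (Φ₀ : Fin 2 → ℂ) : Fin 2 → ℝ :=
  ![V + l1 * (Complex.normSq (Φ₀ 0) - Complex.normSq (Φ₀ 1))
      + l2 * (Complex.normSq (Φ₀ 0) + Complex.normSq (Φ₀ 1)),
    V - l1 * (Complex.normSq (Φ₀ 0) - Complex.normSq (Φ₀ 1))
      + l2 * (Complex.normSq (Φ₀ 0) + Complex.normSq (Φ₀ 1))]

lemma matrix_eq (l1 l2 V : ℝ) (Φ₀ : Fin 2 → ℂ) :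
    (V : ℂ) • (1 : Matrix (Fin 2) (Fin 2) ℂ) + Fnl l1 l2 Φ₀
      = Matrix.diagonal (fun j => ((rv l1 l2 V Φ₀ j : ℝ) : ℂ)) := by
  ext i j
  fin_cases i <;> fin_cases j <;>
    simp [Fnl, pauli3, rv, Matrix.mulVec, dotProduct, Fin.sum_univ_two,
      Matrix.one_apply, Complex.normSq_eq_conj_mul_self] <;> ring

lemma flow_eq (l1 l2 V : ℝ) (Φ₀ : Fin 2 → ℂ) (t : ℝ) (j : Fin 2) :
    substepFlow l1 l2 V Φ₀ t j
      = Complex.exp (-(Complex.I * t) * (rv l1 l2 V Φ₀ j)) * Φ₀ j := by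
  rw [substepFlow, matrix_eq]
  rw [show (-(Complex.I * (t:ℂ))) • Matrix.diagonal (fun j => ((rv l1 l2 V Φ₀ j : ℝ) : ℂ))
      = Matrix.diagonal (fun j => -(Complex.I * t) * (rv l1 l2 V Φ₀ j)) by
    rw [← Matrix.diagonal_smul]; congr 1]
  rw [Matrix.exp_diagonal, Matrix.mulVec_diagonal, Pi.exp_def, Complex.exp_eq_exp_ℂ]

lemma conj_mul_invariant (t r : ℝ) (z : ℂ) :
    (starRingEnd ℂ) (Complex.exp (-(Complex.I * t) * r) * z)
        * (Complex.exp (-(Complex.I * t) * r) * z)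
      = (starRingEnd ℂ) z * z := by
  rw [_root_.map_mul, ← Complex.exp_conj]
  have h1 : (starRingEnd ℂ) (-(Complex.I * t) * r) = Complex.I * t * r := by
    simp [Complex.conj_I]
  rw [h1]
  have h2 : Complex.exp (Complex.I * t * r) * Complex.exp (-(Complex.I * t) * r) = 1 := by
    rw [← Complex.exp_add]; ring_nf; exact Complex.exp_zero
  calc Complex.exp (Complex.I * t * r) * (starRingEnd ℂ) z
        * (Complex.exp (-(Complex.I * t) * r) * z)
      = (Complex.exp (Complex.I * t * r) * Complex.exp (-(Complex.I * t) * r))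
          * ((starRingEnd ℂ) z * z) := by ring
    _ = (starRingEnd ℂ) z * z := by rw [h2, one_mul]

lemma norm_exp_mul (t r : ℝ) (z : ℂ) :
    ‖Complex.exp (-(Complex.I * t) * r) * z‖ = ‖z‖ := by
  rw [norm_mul, Complex.norm_exp]
  have : ((-(Complex.I * t) * r : ℂ)).re = 0 := by simp
  rw [this, Real.exp_zero, one_mul]

lemma dot3 (Ψ : Fin 2 → ℂ) :
    star Ψ ⬝ᵥ pauli3.mulVec Ψ
      = (starRingEnd ℂ) (Ψ 0) * Ψ 0 - (starRingEnd ℂ) (Ψ 1) * Ψ 1 := by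
  simp [pauli3, Matrix.mulVec, dotProduct, Fin.sum_univ_two]; ring

lemma dot1 (Ψ : Fin 2 → ℂ) :
    star Ψ ⬝ᵥ Ψ = (starRingEnd ℂ) (Ψ 0) * Ψ 0 + (starRingEnd ℂ) (Ψ 1) * Ψ 1 := by
  simp [dotProduct, Fin.sum_univ_two]

/-- the nonlinear substep is exactly solvable: along
Φ(t) = exp(−it(V·I₂ + F(Φ₀)))Φ₀ one has Φ(0) = Φ₀, F(Φ(t)) = F(Φ₀) and
|Φ(t)| = |Φ₀| for all t, and Φ solves i·Φ'(t) = (V·I₂ + F(Φ(t)))·Φ(t). -/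
theorem substepFlow_exactly_solvable (l1 l2 V : ℝ) (Φ₀ : Fin 2 → ℂ) :
    substepFlow l1 l2 V Φ₀ 0 = Φ₀ ∧
    ∀ t : ℝ,
      Fnl l1 l2 (substepFlow l1 l2 V Φ₀ t) = Fnl l1 l2 Φ₀ ∧
      eucNorm (substepFlow l1 l2 V Φ₀ t) = eucNorm Φ₀ ∧
      ∃ D : Fin 2 → ℂ,
        HasDerivAt (substepFlow l1 l2 V Φ₀) D t ∧
        Complex.I • D
          = ((V : ℂ) • (1 : Matrix (Fin 2) (Fin 2) ℂ)
              + Fnl l1 l2 (substepFlow l1 l2 V Φ₀ t)).mulVec (substepFlow l1 l2 V Φ₀ t) := by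
  set r := rv l1 l2 V Φ₀ with hr
  constructor
  · funext j
    rw [flow_eq]
    simp
  intro t
  have hc : ∀ j, (starRingEnd ℂ) (substepFlow l1 l2 V Φ₀ t j) * substepFlow l1 l2 V Φ₀ t j
      = (starRingEnd ℂ) (Φ₀ j) * Φ₀ j := by
    intro j; rw [flow_eq]; exact conj_mul_invariant t (r j) (Φ₀ j)
  have hF : Fnl l1 l2 (substepFlow l1 l2 V Φ₀ t) = Fnl l1 l2 Φ₀ := by
    unfold Fnl
    rw [dot3, dot3, dot1, dot1, hc 0, hc 1]
  refine ⟨hF, ?_, ?_⟩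
  · unfold eucNorm
    rw [flow_eq, flow_eq, norm_exp_mul, norm_exp_mul]
  · refine ⟨fun j => (-Complex.I * r j) * Complex.exp (-(Complex.I * t) * r j) * Φ₀ j, ?_, ?_⟩
    · rw [hasDerivAt_pi]
      intro j
      have hfun : (fun s => substepFlow l1 l2 V Φ₀ s j)
          = fun s : ℝ => Complex.exp (-(Complex.I * s) * r j) * Φ₀ j := by
        funext s; rw [flow_eq]
      rw [hfun]
      have h1 : HasDerivAt (fun z : ℂ => Complex.exp (-(Complex.I * z) * r j) * Φ₀ j)
          ((-Complex.I * r j) * Complex.exp (-(Complex.I * (t:ℂ)) * r j) * Φ₀ j) (t : ℂ) := by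
        have hlin : HasDerivAt (fun z : ℂ => -(Complex.I * z) * (r j : ℂ))
            (-Complex.I * r j) (t : ℂ) := by
          have := ((hasDerivAt_id (t : ℂ)).const_mul (-Complex.I)).mul_const ((r j : ℝ) : ℂ)
          have hf : (fun z : ℂ => -(Complex.I * z) * (r j : ℂ))
              = fun y => -Complex.I * id y * ((r j : ℝ) : ℂ) := by
            funext z; simp only [id_eq]; ring
          rw [hf]; exact this.congr_deriv (by ring)
        have := (hlin.cexp).mul_const (Φ₀ j)
        exact this.congr_deriv (by ring)
      exact h1.comp_ofReal
    · funext j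
      have : ((V : ℂ) • (1 : Matrix (Fin 2) (Fin 2) ℂ)
              + Fnl l1 l2 (substepFlow l1 l2 V Φ₀ t)) = Matrix.diagonal (fun j => ((r j : ℝ) : ℂ)) := by
        rw [hF, matrix_eq]
      rw [this]
      rw [Matrix.mulVec_diagonal, flow_eq]
      simp only [Pi.smul_apply, smul_eq_mul]
      have hI : Complex.I * -Complex.I = 1 := by
        simp [Complex.I_mul_I]
      calc Complex.I * (-Complex.I * r j * Complex.exp (-(Complex.I * t) * r j) * Φ₀ j)
          = (Complex.I * -Complex.I) * (r j * (Complex.exp (-(Complex.I * t) * r j) * Φ₀ j)) := by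
            ring
        _ = (r j : ℂ) * (Complex.exp (-(Complex.I * t) * r j) * Φ₀ j) := by rw [hI, one_mul]
end
end

section
/- Pointwise stability of the nonlinear substep (pointwise core of the stability lemma for the Lie–Trotter propagator): for all λ₁, λ₂ ∈ ℝ, τ ≥ 0, M ≥ 0 and all Φ, Ψ ∈ ℂ² with |Φ| ≤ M and |Ψ| ≤ M, one has |exp(−iτF(Φ))·Φ − exp(−iτF(Ψ))·Ψ| ≤ (1 + 2(|λ₁| + |λ₂|)·M²·τ)·|Φ − Ψ|, where |·| is the Euclidean norm on ℂ². -/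
open Matrix

noncomputable section

/-! ### Auxiliary lemmas -/

lemma exp_I_sub_one_norm (θ : ℝ) : ‖Complex.exp (θ * Complex.I) - 1‖ ≤ |θ| := by
  rw [← Real.sqrt_sq_eq_abs, Complex.norm_def]
  apply Real.sqrt_le_sqrt
  rw [Complex.normSq_apply]
  simp only [Complex.sub_re, Complex.sub_im, Complex.one_re, Complex.one_im,
    Complex.exp_ofReal_mul_I_re, Complex.exp_ofReal_mul_I_im]
  have h2 : Real.cos (2 * (θ/2)) = 2 * Real.cos (θ/2)^2 - 1 := Real.cos_two_mul _
  have h3 : Real.sin (θ/2)^2 + Real.cos (θ/2)^2 = 1 := Real.sin_sq_add_cos_sq _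
  have h4 : Real.sin θ ^2 + Real.cos θ ^2 = 1 := Real.sin_sq_add_cos_sq _
  have h5 : (2:ℝ) * (θ/2) = θ := by ring
  rw [h5] at h2
  have h6 : Real.sin (θ/2)^2 ≤ (θ/2)^2 := by
    have h1 : |Real.sin (θ/2)| ≤ |θ/2| := Real.abs_sin_le_abs
    nlinarith [sq_abs (Real.sin (θ/2)), sq_abs (θ/2), abs_nonneg (Real.sin (θ/2)), abs_nonneg (θ/2)]
  nlinarith

lemma phase_diff (a b : ℝ) :
    ‖Complex.exp ((a:ℂ) * Complex.I) - Complex.exp ((b:ℂ) * Complex.I)‖ ≤ |a - b| := by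
  have h : Complex.exp ((a:ℂ) * Complex.I) - Complex.exp ((b:ℂ) * Complex.I)
      = Complex.exp ((b:ℂ) * Complex.I) * (Complex.exp (((a-b:ℝ):ℂ) * Complex.I) - 1) := by
    rw [mul_sub, ← Complex.exp_add, mul_one]
    push_cast
    ring_nf
  rw [h, norm_mul, Complex.norm_exp_ofReal_mul_I, one_mul]
  exact exp_I_sub_one_norm _

lemma comp_est (a b : ℝ) (u v : ℂ) :
    ‖Complex.exp ((a:ℂ) * Complex.I) * u - Complex.exp ((b:ℂ) * Complex.I) * v‖
      ≤ ‖u - v‖ + |a - b| * ‖v‖ := by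
  have h : Complex.exp ((a:ℂ) * Complex.I) * u - Complex.exp ((b:ℂ) * Complex.I) * v
      = Complex.exp ((a:ℂ) * Complex.I) * (u - v)
        + (Complex.exp ((a:ℂ) * Complex.I) - Complex.exp ((b:ℂ) * Complex.I)) * v := by ring
  rw [h]
  refine (norm_add_le _ _).trans ?_
  rw [norm_mul, norm_mul, Complex.norm_exp_ofReal_mul_I, one_mul]
  gcongr
  exact phase_diff a b

lemma conj_mul_self' (z : ℂ) : (starRingEnd ℂ) z * z = ((‖z‖^2 : ℝ) : ℂ) := by
  rw [mul_comm, Complex.mul_conj, Complex.normSq_eq_norm_sq]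

lemma Fnl_eq_diag (l1 l2 : ℝ) (Φ : Fin 2 → ℂ) :
    Fnl l1 l2 Φ = Matrix.diagonal
      ![(((l1*(‖Φ 0‖^2 - ‖Φ 1‖^2) + l2*(‖Φ 0‖^2 + ‖Φ 1‖^2) : ℝ)) : ℂ),
        (((-l1*(‖Φ 0‖^2 - ‖Φ 1‖^2) + l2*(‖Φ 0‖^2 + ‖Φ 1‖^2) : ℝ)) : ℂ)] := by
  ext i j
  fin_cases i <;> fin_cases j <;>
    simp only [Fnl, pauli3, Matrix.add_apply, Matrix.smul_apply, Matrix.mulVec,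
      dotProduct, Fin.sum_univ_two, Matrix.one_apply, Matrix.diagonal,
      Pi.star_apply, RCLike.star_def, conj_mul_self', Matrix.cons_val', Matrix.cons_val_zero,
      Matrix.cons_val_one, Matrix.head_cons, Matrix.head_fin_const, Matrix.of_apply,
      Matrix.cons_val_fin_one, smul_eq_mul] <;>
    push_cast <;> ring_nf <;>
    simp only [mul_assoc, conj_mul_self', Complex.mul_conj, Complex.normSq_eq_norm_sq] <;> push_cast <;> simp

/-- The phase angles of `Fnl`. -/
def thA (l1 l2 τ : ℝ) (X : Fin 2 → ℂ) (k : Fin 2) : ℝ :=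
  -(τ * ((![1,-1] k : ℝ) * (l1*(‖X 0‖^2 - ‖X 1‖^2)) + l2*(‖X 0‖^2 + ‖X 1‖^2)))

lemma exp_mulVec (l1 l2 τ : ℝ) (Φ : Fin 2 → ℂ) (k : Fin 2) :
    (NormedSpace.exp ((-(Complex.I * (τ : ℂ))) • Fnl l1 l2 Φ)).mulVec Φ k
      = Complex.exp (((thA l1 l2 τ Φ k : ℝ) : ℂ) * Complex.I) * Φ k := by
  rw [Fnl_eq_diag]
  have h : (-(Complex.I * (τ : ℂ))) • Matrix.diagonal
      ![(((l1*(‖Φ 0‖^2 - ‖Φ 1‖^2) + l2*(‖Φ 0‖^2 + ‖Φ 1‖^2) : ℝ)) : ℂ),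
        (((-l1*(‖Φ 0‖^2 - ‖Φ 1‖^2) + l2*(‖Φ 0‖^2 + ‖Φ 1‖^2) : ℝ)) : ℂ)]
      = Matrix.diagonal (fun k => (((thA l1 l2 τ Φ k : ℝ) : ℂ) * Complex.I)) := by
    ext i j
    fin_cases i <;> fin_cases j <;>
      simp [Matrix.diagonal, Matrix.smul_apply, thA] <;> push_cast <;> ring
  rw [h, Matrix.exp_diagonal, Matrix.mulVec_diagonal, Pi.exp_def, ← Complex.exp_eq_exp_ℂ]

lemma cs2 (a b c d : ℝ) : (a*c + b*d)^2 ≤ (a^2+b^2)*(c^2+d^2) := by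
  nlinarith [sq_nonneg (a*d - b*c)]

lemma le_of_sq_le_sq' (x y : ℝ) (hx : 0 ≤ x) (hy : 0 ≤ y) (h : x^2 ≤ y^2) : x ≤ y := by
  have h2 := Real.sqrt_le_sqrt h
  rwa [Real.sqrt_sq hx, Real.sqrt_sq hy] at h2

lemma main_est (l1 l2 τ M p0 p1 q0 q1 d0 d1 v0 v1 e Q : ℝ)
    (hτ : 0 ≤ τ) (hM : 0 ≤ M)
    (hp0n : 0 ≤ p0) (hp1n : 0 ≤ p1) (hq0n : 0 ≤ q0) (hq1n : 0 ≤ q1)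
    (hd0n : 0 ≤ d0) (hd1n : 0 ≤ d1) (hv0n : 0 ≤ v0) (hv1n : 0 ≤ v1)
    (he0 : 0 ≤ e) (hQ0 : 0 ≤ Q)
    (he2 : e^2 = d0^2 + d1^2) (hQ2 : Q^2 = q0^2 + q1^2)
    (hpM : p0^2 + p1^2 ≤ M^2) (hqM : q0^2 + q1^2 ≤ M^2) (hQM : Q ≤ M)
    (hx0 : |p0^2 - q0^2| ≤ (p0+q0)*d0) (hx1 : |p1^2 - q1^2| ≤ (p1+q1)*d1)
    (hb0 : v0 ≤ d0 + (τ * |(l1*(p0^2-p1^2) + l2*(p0^2+p1^2))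
        - (l1*(q0^2-q1^2) + l2*(q0^2+q1^2))|) * q0)
    (hb1 : v1 ≤ d1 + (τ * |(-l1*(p0^2-p1^2) + l2*(p0^2+p1^2))
        - (-l1*(q0^2-q1^2) + l2*(q0^2+q1^2))|) * q1) :
    Real.sqrt (v0^2 + v1^2) ≤ (1 + 2*(|l1|+|l2|)*M^2*τ) * e := by
  obtain ⟨S, hS_def⟩ : ∃ S : ℝ, S = (p0+q0)*d0 + (p1+q1)*d1 := ⟨_, rfl⟩
  have hSn : 0 ≤ S := by rw [hS_def]; positivity
  have hS2 : S^2 ≤ ((p0+q0)^2+(p1+q1)^2)*(d0^2+d1^2) := by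
    rw [hS_def]; exact cs2 (p0+q0) (p1+q1) d0 d1
  have hsum : (p0+q0)^2+(p1+q1)^2 ≤ 4*M^2 := by
    nlinarith [sq_nonneg (p0-q0), sq_nonneg (p1-q1)]
  have hS4 : S^2 ≤ (2*M*e)^2 := by
    calc S^2 ≤ ((p0+q0)^2+(p1+q1)^2)*(d0^2+d1^2) := hS2
      _ ≤ 4*M^2*(d0^2+d1^2) := mul_le_mul_of_nonneg_right hsum (by positivity)
      _ = (2*M*e)^2 := by rw [show (2*M*e)^2 = 4*M^2*e^2 by ring, he2]
  have hS : S ≤ 2*M*e := le_of_sq_le_sq' _ _ hSn (by positivity) hS4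
  -- bounds on the two phase differences
  have h1 : |(p0^2-q0^2) - (p1^2-q1^2)| ≤ S := by
    refine (abs_sub _ _).trans ?_
    rw [hS_def]; linarith
  have h2 : |(p0^2-q0^2) + (p1^2-q1^2)| ≤ S := by
    refine (abs_add_le _ _).trans ?_
    rw [hS_def]; linarith
  have habs0 : |(l1*(p0^2-p1^2) + l2*(p0^2+p1^2)) - (l1*(q0^2-q1^2) + l2*(q0^2+q1^2))|
      ≤ (|l1|+|l2|)*S := by
    rw [show (l1*(p0^2-p1^2) + l2*(p0^2+p1^2)) - (l1*(q0^2-q1^2) + l2*(q0^2+q1^2))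
        = l1*((p0^2-q0^2) - (p1^2-q1^2)) + l2*((p0^2-q0^2) + (p1^2-q1^2)) by ring]
    refine (abs_add_le _ _).trans ?_
    rw [abs_mul, abs_mul]
    have := add_le_add (mul_le_mul_of_nonneg_left h1 (abs_nonneg l1))
      (mul_le_mul_of_nonneg_left h2 (abs_nonneg l2))
    linarith
  have habs1 : |(-l1*(p0^2-p1^2) + l2*(p0^2+p1^2)) - (-l1*(q0^2-q1^2) + l2*(q0^2+q1^2))|
      ≤ (|l1|+|l2|)*S := by
    rw [show (-l1*(p0^2-p1^2) + l2*(p0^2+p1^2)) - (-l1*(q0^2-q1^2) + l2*(q0^2+q1^2))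
        = (-l1)*((p0^2-q0^2) - (p1^2-q1^2)) + l2*((p0^2-q0^2) + (p1^2-q1^2)) by ring]
    refine (abs_add_le _ _).trans ?_
    rw [abs_mul, abs_mul, abs_neg]
    have := add_le_add (mul_le_mul_of_nonneg_left h1 (abs_nonneg l1))
      (mul_le_mul_of_nonneg_left h2 (abs_nonneg l2))
    linarith
  obtain ⟨C, hC_def⟩ : ∃ C : ℝ, C = τ*((|l1|+|l2|)*(2*M*e)) := ⟨_, rfl⟩
  have hCn : 0 ≤ C := by rw [hC_def]; positivity
  have hL : (0:ℝ) ≤ |l1|+|l2| := by positivity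
  have hc0 : τ * |(l1*(p0^2-p1^2) + l2*(p0^2+p1^2)) - (l1*(q0^2-q1^2) + l2*(q0^2+q1^2))| ≤ C := by
    rw [hC_def]
    refine mul_le_mul_of_nonneg_left ?_ hτ
    exact habs0.trans (mul_le_mul_of_nonneg_left hS hL)
  have hc1 : τ * |(-l1*(p0^2-p1^2) + l2*(p0^2+p1^2)) - (-l1*(q0^2-q1^2) + l2*(q0^2+q1^2))| ≤ C := by
    rw [hC_def]
    refine mul_le_mul_of_nonneg_left ?_ hτ
    exact habs1.trans (mul_le_mul_of_nonneg_left hS hL)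
  have hv0 : v0 ≤ d0 + C*q0 := by
    refine hb0.trans ?_
    have := mul_le_mul_of_nonneg_right hc0 hq0n
    linarith
  have hv1 : v1 ≤ d1 + C*q1 := by
    refine hb1.trans ?_
    have := mul_le_mul_of_nonneg_right hc1 hq1n
    linarith
  have hcross : d0*q0 + d1*q1 ≤ e*Q := by
    have heQ : (e*Q)^2 = (d0^2+d1^2)*(q0^2+q1^2) := by rw [mul_pow, he2, hQ2]
    refine le_of_sq_le_sq' _ _ (by positivity) (mul_nonneg he0 hQ0) ?_
    rw [heQ]
    exact cs2 d0 d1 q0 q1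
  calc Real.sqrt (v0^2 + v1^2) ≤ Real.sqrt ((e + C*Q)^2) := by
        apply Real.sqrt_le_sqrt
        have hA : v0^2 ≤ (d0 + C*q0)^2 := by
          apply pow_le_pow_left₀ hv0n hv0
        have hB : v1^2 ≤ (d1 + C*q1)^2 := by
          apply pow_le_pow_left₀ hv1n hv1
        have hC2 : (d0 + C*q0)^2 + (d1 + C*q1)^2 ≤ (e + C*Q)^2 := by
          have hexp : (e + C*Q)^2 = e^2 + 2*(C*(e*Q)) + C^2*Q^2 := by ring
          have hexp2 : (d0 + C*q0)^2 + (d1 + C*q1)^2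
              = d0^2 + d1^2 + 2*(C*(d0*q0 + d1*q1)) + C^2*(q0^2+q1^2) := by ring
          rw [hexp, hexp2, he2, hQ2]
          have h2 : C*(d0*q0 + d1*q1) ≤ C*(e*Q) := mul_le_mul_of_nonneg_left hcross hCn
          linarith [h2]
        linarith
    _ = e + C*Q := Real.sqrt_sq (by positivity)
    _ ≤ e + C*M := by linarith [mul_le_mul_of_nonneg_left hQM hCn]
    _ = (1 + 2*(|l1|+|l2|)*M^2*τ) * e := by rw [hC_def]; ring

/-- pointwise stability of the nonlinear substep: for |Φ|,|Ψ| ≤ M,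
|e^{−iτF(Φ)}Φ − e^{−iτF(Ψ)}Ψ| ≤ (1 + 2(|λ₁|+|λ₂|)M²τ)|Φ − Ψ|. -/
theorem substep_pointwise_stability (l1 l2 τ M : ℝ) (hτ : 0 ≤ τ) (hM : 0 ≤ M)
    (Φ Ψ : Fin 2 → ℂ) (hΦ : eucNorm Φ ≤ M) (hΨ : eucNorm Ψ ≤ M) :
    eucNorm ((NormedSpace.exp ((-(Complex.I * (τ : ℂ))) • Fnl l1 l2 Φ)).mulVec Φ
        - (NormedSpace.exp ((-(Complex.I * (τ : ℂ))) • Fnl l1 l2 Ψ)).mulVec Ψ)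
      ≤ (1 + 2 * (|l1| + |l2|) * M ^ 2 * τ) * eucNorm (Φ - Ψ) := by
  have hΦ' : Real.sqrt (‖Φ 0‖^2 + ‖Φ 1‖^2) ≤ M := hΦ
  have hΨ' : Real.sqrt (‖Ψ 0‖^2 + ‖Ψ 1‖^2) ≤ M := hΨ
  have hpM : ‖Φ 0‖^2 + ‖Φ 1‖^2 ≤ M^2 := by
    have h2 := pow_le_pow_left₀ (Real.sqrt_nonneg _) hΦ' 2
    rwa [Real.sq_sqrt (by positivity)] at h2
  have hqM : ‖Ψ 0‖^2 + ‖Ψ 1‖^2 ≤ M^2 := by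
    have h2 := pow_le_pow_left₀ (Real.sqrt_nonneg _) hΨ' 2
    rwa [Real.sq_sqrt (by positivity)] at h2
  have hx0 : |‖Φ 0‖^2 - ‖Ψ 0‖^2| ≤ (‖Φ 0‖ + ‖Ψ 0‖) * ‖Φ 0 - Ψ 0‖ := by
    have h := abs_norm_sub_norm_le (Φ 0) (Ψ 0)
    rw [show ‖Φ 0‖^2 - ‖Ψ 0‖^2 = (‖Φ 0‖ - ‖Ψ 0‖)*(‖Φ 0‖ + ‖Ψ 0‖) by ring, abs_mul,
      show |‖Φ 0‖ + ‖Ψ 0‖| = ‖Φ 0‖ + ‖Ψ 0‖ from abs_of_nonneg (by positivity)]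
    calc |‖Φ 0‖ - ‖Ψ 0‖| * (‖Φ 0‖ + ‖Ψ 0‖) ≤ ‖Φ 0 - Ψ 0‖ * (‖Φ 0‖ + ‖Ψ 0‖) :=
          mul_le_mul_of_nonneg_right h (by positivity)
      _ = (‖Φ 0‖ + ‖Ψ 0‖) * ‖Φ 0 - Ψ 0‖ := mul_comm _ _
  have hx1 : |‖Φ 1‖^2 - ‖Ψ 1‖^2| ≤ (‖Φ 1‖ + ‖Ψ 1‖) * ‖Φ 1 - Ψ 1‖ := by
    have h := abs_norm_sub_norm_le (Φ 1) (Ψ 1)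
    rw [show ‖Φ 1‖^2 - ‖Ψ 1‖^2 = (‖Φ 1‖ - ‖Ψ 1‖)*(‖Φ 1‖ + ‖Ψ 1‖) by ring, abs_mul,
      show |‖Φ 1‖ + ‖Ψ 1‖| = ‖Φ 1‖ + ‖Ψ 1‖ from abs_of_nonneg (by positivity)]
    calc |‖Φ 1‖ - ‖Ψ 1‖| * (‖Φ 1‖ + ‖Ψ 1‖) ≤ ‖Φ 1 - Ψ 1‖ * (‖Φ 1‖ + ‖Ψ 1‖) :=
          mul_le_mul_of_nonneg_right h (by positivity)
      _ = (‖Φ 1‖ + ‖Ψ 1‖) * ‖Φ 1 - Ψ 1‖ := mul_comm _ _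
  have hb0 : ‖(NormedSpace.exp ((-(Complex.I * (τ : ℂ))) • Fnl l1 l2 Φ)).mulVec Φ 0
        - (NormedSpace.exp ((-(Complex.I * (τ : ℂ))) • Fnl l1 l2 Ψ)).mulVec Ψ 0‖
      ≤ ‖Φ 0 - Ψ 0‖ + (τ * |(l1*(‖Φ 0‖^2-‖Φ 1‖^2) + l2*(‖Φ 0‖^2+‖Φ 1‖^2))
        - (l1*(‖Ψ 0‖^2-‖Ψ 1‖^2) + l2*(‖Ψ 0‖^2+‖Ψ 1‖^2))|) * ‖Ψ 0‖ := by
    rw [exp_mulVec, exp_mulVec]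
    have hph : |thA l1 l2 τ Φ 0 - thA l1 l2 τ Ψ 0|
        = τ * |(l1*(‖Φ 0‖^2-‖Φ 1‖^2) + l2*(‖Φ 0‖^2+‖Φ 1‖^2))
          - (l1*(‖Ψ 0‖^2-‖Ψ 1‖^2) + l2*(‖Ψ 0‖^2+‖Ψ 1‖^2))| := by
      rw [show thA l1 l2 τ Φ 0 - thA l1 l2 τ Ψ 0
          = -(τ * ((l1*(‖Φ 0‖^2-‖Φ 1‖^2) + l2*(‖Φ 0‖^2+‖Φ 1‖^2))
            - (l1*(‖Ψ 0‖^2-‖Ψ 1‖^2) + l2*(‖Ψ 0‖^2+‖Ψ 1‖^2)))) by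
        simp only [thA, Matrix.cons_val_zero]; ring]
      rw [abs_neg, abs_mul, abs_of_nonneg hτ]
    calc _ ≤ ‖Φ 0 - Ψ 0‖ + |thA l1 l2 τ Φ 0 - thA l1 l2 τ Ψ 0| * ‖Ψ 0‖ := comp_est _ _ _ _
      _ = _ := by rw [hph]
  have hb1 : ‖(NormedSpace.exp ((-(Complex.I * (τ : ℂ))) • Fnl l1 l2 Φ)).mulVec Φ 1
        - (NormedSpace.exp ((-(Complex.I * (τ : ℂ))) • Fnl l1 l2 Ψ)).mulVec Ψ 1‖
      ≤ ‖Φ 1 - Ψ 1‖ + (τ * |(-l1*(‖Φ 0‖^2-‖Φ 1‖^2) + l2*(‖Φ 0‖^2+‖Φ 1‖^2))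
        - (-l1*(‖Ψ 0‖^2-‖Ψ 1‖^2) + l2*(‖Ψ 0‖^2+‖Ψ 1‖^2))|) * ‖Ψ 1‖ := by
    rw [exp_mulVec, exp_mulVec]
    have hph : |thA l1 l2 τ Φ 1 - thA l1 l2 τ Ψ 1|
        = τ * |(-l1*(‖Φ 0‖^2-‖Φ 1‖^2) + l2*(‖Φ 0‖^2+‖Φ 1‖^2))
          - (-l1*(‖Ψ 0‖^2-‖Ψ 1‖^2) + l2*(‖Ψ 0‖^2+‖Ψ 1‖^2))| := by
      rw [show thA l1 l2 τ Φ 1 - thA l1 l2 τ Ψ 1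
          = -(τ * ((-l1*(‖Φ 0‖^2-‖Φ 1‖^2) + l2*(‖Φ 0‖^2+‖Φ 1‖^2))
            - (-l1*(‖Ψ 0‖^2-‖Ψ 1‖^2) + l2*(‖Ψ 0‖^2+‖Ψ 1‖^2)))) by
        simp only [thA, Matrix.cons_val_one, Matrix.head_cons, Matrix.cons_val_zero]; ring]
      rw [abs_neg, abs_mul, abs_of_nonneg hτ]
    calc _ ≤ ‖Φ 1 - Ψ 1‖ + |thA l1 l2 τ Φ 1 - thA l1 l2 τ Ψ 1| * ‖Ψ 1‖ := comp_est _ _ _ _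
      _ = _ := by rw [hph]
  simp only [eucNorm, Pi.sub_apply]
  exact main_est l1 l2 τ M ‖Φ 0‖ ‖Φ 1‖ ‖Ψ 0‖ ‖Ψ 1‖ ‖Φ 0 - Ψ 0‖ ‖Φ 1 - Ψ 1‖ _ _ _ _
    hτ hM (norm_nonneg _) (norm_nonneg _) (norm_nonneg _) (norm_nonneg _)
    (norm_nonneg _) (norm_nonneg _) (norm_nonneg _) (norm_nonneg _)
    (Real.sqrt_nonneg _) (Real.sqrt_nonneg _)
    (Real.sq_sqrt (by positivity)) (Real.sq_sqrt (by positivity))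
    hpM hqM hΨ' hx0 hx1 hb0 hb1
end
end

section
/- Two-dimensional midpoint quadrature estimate over a triangle: let E be a real normed space, τ > 0, and g : ℝ × ℝ → E be continuously differentiable on [0, τ]² with ‖g(s,w)‖ ≤ M₀ and ‖∂_s g(s,w)‖ ≤ M₁, ‖∂_w g(s,w)‖ ≤ M₁ for all (s,w) ∈ [0, τ]². Then ‖∫₀^τ ∫₀^s g(s,w) dw ds − (τ²/2)·g(τ/2, τ/2)‖ ≤ min((3/2)τ²M₀, τ³M₁). -/
open Set intervalIntegral

/-- two-dimensional midpoint quadrature estimate over a triangle: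
if g is continuously differentiable on [0,τ]² with ‖g‖ ≤ M₀ and both partial
derivatives bounded by M₁ there, then
‖∫₀^τ ∫₀^s g(s,w) dw ds − (τ²/2)g(τ/2,τ/2)‖ ≤ min((3/2)τ²M₀, τ³M₁). -/
theorem triangle_midpoint_quadrature {E : Type*} [NormedAddCommGroup E] [NormedSpace ℝ E]
    [CompleteSpace E] (τ M₀ M₁ : ℝ) (hτ : 0 < τ) (g gs gw : ℝ → ℝ → E)
    (hcont : ContinuousOn (fun p : ℝ × ℝ => g p.1 p.2) (Set.Icc 0 τ ×ˢ Set.Icc 0 τ))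
    (hconts : ContinuousOn (fun p : ℝ × ℝ => gs p.1 p.2) (Set.Icc 0 τ ×ˢ Set.Icc 0 τ))
    (hcontw : ContinuousOn (fun p : ℝ × ℝ => gw p.1 p.2) (Set.Icc 0 τ ×ˢ Set.Icc 0 τ))
    (hds : ∀ s ∈ Set.Icc (0 : ℝ) τ, ∀ w ∈ Set.Icc (0 : ℝ) τ,
      HasDerivAt (fun s' => g s' w) (gs s w) s)
    (hdw : ∀ s ∈ Set.Icc (0 : ℝ) τ, ∀ w ∈ Set.Icc (0 : ℝ) τ,
      HasDerivAt (fun w' => g s w') (gw s w) w)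
    (hM₀ : ∀ s ∈ Set.Icc (0 : ℝ) τ, ∀ w ∈ Set.Icc (0 : ℝ) τ, ‖g s w‖ ≤ M₀)
    (hM₁s : ∀ s ∈ Set.Icc (0 : ℝ) τ, ∀ w ∈ Set.Icc (0 : ℝ) τ, ‖gs s w‖ ≤ M₁)
    (hM₁w : ∀ s ∈ Set.Icc (0 : ℝ) τ, ∀ w ∈ Set.Icc (0 : ℝ) τ, ‖gw s w‖ ≤ M₁) :
    ‖(∫ s in (0 : ℝ)..τ, ∫ w in (0 : ℝ)..s, g s w) - (τ ^ 2 / 2) • g (τ / 2) (τ / 2)‖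
      ≤ min (3 / 2 * τ ^ 2 * M₀) (τ ^ 3 * M₁) := by
  have hmid : τ / 2 ∈ Set.Icc (0 : ℝ) τ := ⟨by linarith, by linarith⟩
  have h0 : (0 : ℝ) ∈ Set.Icc (0 : ℝ) τ := ⟨le_refl _, hτ.le⟩
  have hM₀0 : 0 ≤ M₀ := le_trans (norm_nonneg _) (hM₀ 0 h0 0 h0)
  have hM₁0 : 0 ≤ M₁ := le_trans (norm_nonneg _) (hM₁s 0 h0 0 h0)
  set c := g (τ / 2) (τ / 2) with hc
  set B := min (2 * M₀) (τ * M₁) with hB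
  have hBnn : 0 ≤ B := le_min (by linarith) (by positivity)
  -- pointwise bound
  have key : ∀ s ∈ Set.Icc (0 : ℝ) τ, ∀ w ∈ Set.Icc (0 : ℝ) τ, ‖g s w - c‖ ≤ B := by
    intro s hs w hw
    refine le_min ?_ ?_
    · have := hM₀ s hs w hw
      have := hM₀ _ hmid _ hmid
      calc ‖g s w - c‖ ≤ ‖g s w‖ + ‖c‖ := norm_sub_le _ _
        _ ≤ 2 * M₀ := by linarith
    · have h1 : ‖g s w - g (τ / 2) w‖ ≤ M₁ * ‖s - τ / 2‖ := by
        apply (convex_Icc (0 : ℝ) τ).norm_image_sub_le_of_norm_hasDerivWithin_le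
          (f := fun s' => g s' w) (f' := fun s' => gs s' w)
          (fun x hx => (hds x hx w hw).hasDerivWithinAt)
          (fun x hx => hM₁s x hx w hw) hmid hs
      have h2 : ‖g (τ / 2) w - c‖ ≤ M₁ * ‖w - τ / 2‖ := by
        apply (convex_Icc (0 : ℝ) τ).norm_image_sub_le_of_norm_hasDerivWithin_le
          (f := fun w' => g (τ / 2) w') (f' := fun w' => gw (τ / 2) w')
          (fun x hx => (hdw _ hmid x hx).hasDerivWithinAt)
          (fun x hx => hM₁w _ hmid x hx) hmid hw
      have hs1 : ‖s - τ / 2‖ ≤ τ / 2 := by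
        rw [Real.norm_eq_abs, abs_le]; constructor <;> [linarith [hs.1]; linarith [hs.2]]
      have hw1 : ‖w - τ / 2‖ ≤ τ / 2 := by
        rw [Real.norm_eq_abs, abs_le]; constructor <;> [linarith [hw.1]; linarith [hw.2]]
      calc ‖g s w - c‖ = ‖(g s w - g (τ / 2) w) + (g (τ / 2) w - c)‖ := by abel_nf
        _ ≤ ‖g s w - g (τ / 2) w‖ + ‖g (τ / 2) w - c‖ := norm_add_le _ _
        _ ≤ M₁ * (τ / 2) + M₁ * (τ / 2) := by
            refine add_le_add (h1.trans ?_) (h2.trans ?_) <;> nlinarith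
        _ = τ * M₁ := by ring
  -- projection onto [0, τ] and the extended function
  set π : ℝ → ℝ := fun x => max 0 (min x τ) with hπ
  have hπc : Continuous π := continuous_const.max (continuous_id.min continuous_const)
  have hπmem : ∀ x, π x ∈ Set.Icc (0 : ℝ) τ :=
    fun x => ⟨le_max_left _ _, max_le hτ.le (min_le_right _ _)⟩
  have hπid : ∀ x ∈ Set.Icc (0 : ℝ) τ, π x = x := by
    intro x hx
    simp only [hπ, min_eq_left hx.2, max_eq_right hx.1]
  set f : ℝ → ℝ → E := fun s w => g (π s) (π w) - c with hf
  have hfc : Continuous (Function.uncurry f) := by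
    apply Continuous.sub _ continuous_const
    exact hcont.comp_continuous ((hπc.comp continuous_fst).prodMk (hπc.comp continuous_snd))
      (fun p => ⟨hπmem _, hπmem _⟩)
  set F : ℝ → E := fun s => ∫ w in (0 : ℝ)..s, f s w with hFdef
  have hFc : Continuous F :=
    continuous_parametric_intervalIntegral_of_continuous (f := f) hfc continuous_id
  -- rewrite the double integral
  have hinner : ∀ s ∈ Set.Icc (0 : ℝ) τ,
      (∫ w in (0 : ℝ)..s, g s w) = F s + s • c := by
    intro s hs
    have hcg : (∫ w in (0 : ℝ)..s, g s w) = ∫ w in (0 : ℝ)..s, (f s w + c) := by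
      apply intervalIntegral.integral_congr
      intro w hw
      rw [Set.uIcc_of_le hs.1] at hw
      have hw' : w ∈ Set.Icc (0 : ℝ) τ := ⟨hw.1, hw.2.trans hs.2⟩
      simp [hf, hπid s hs, hπid w hw']
    rw [hcg, intervalIntegral.integral_add ((hfc.uncurry_left s).intervalIntegrable 0 s)
      (intervalIntegrable_const), intervalIntegral.integral_const]
    simp [hFdef]
  have hsplit : (∫ s in (0 : ℝ)..τ, ∫ w in (0 : ℝ)..s, g s w)
      = (∫ s in (0 : ℝ)..τ, F s) + (τ ^ 2 / 2) • c := by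
    have : (∫ s in (0 : ℝ)..τ, ∫ w in (0 : ℝ)..s, g s w)
        = ∫ s in (0 : ℝ)..τ, (F s + s • c) := by
      apply intervalIntegral.integral_congr
      intro s hs
      rw [Set.uIcc_of_le hτ.le] at hs
      exact hinner s hs
    rw [this, intervalIntegral.integral_add (hFc.intervalIntegrable 0 τ)
      (((by fun_prop : Continuous fun s : ℝ => s • c)).intervalIntegrable 0 τ)]
    congr 1
    rw [intervalIntegral.integral_smul_const, integral_id]
    simp
  rw [hsplit]
  have hnormF : ∀ s ∈ Set.Icc (0 : ℝ) τ, ‖F s‖ ≤ B * s := by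
    intro s hs
    have := intervalIntegral.norm_integral_le_of_norm_le_const
      (a := 0) (b := s) (C := B) (f := f s) ?_
    · calc ‖F s‖ ≤ B * |s - 0| := this
        _ = B * s := by rw [sub_zero, abs_of_nonneg hs.1]
    · intro w hw
      rw [Set.uIoc_of_le hs.1] at hw
      have hw' : w ∈ Set.Icc (0 : ℝ) τ := ⟨hw.1.le, hw.2.trans hs.2⟩
      have := key s hs w hw'
      simpa [hf, hπid s hs, hπid w hw'] using this
  have hmain : ‖∫ s in (0 : ℝ)..τ, F s‖ ≤ B * (τ ^ 2 / 2) := by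
    have h1 : ‖∫ s in (0 : ℝ)..τ, F s‖ ≤ |∫ s in (0 : ℝ)..τ, B * s| := by
      apply intervalIntegral.norm_integral_le_abs_of_norm_le
      · refine (MeasureTheory.ae_restrict_iff' measurableSet_uIoc).2 ?_
        filter_upwards with s hs
        rw [Set.uIoc_of_le hτ.le] at hs
        exact hnormF s ⟨hs.1.le, hs.2⟩
      · exact (continuous_const.mul continuous_id).intervalIntegrable 0 τ
    rw [intervalIntegral.integral_const_mul, integral_id] at h1
    calc ‖∫ s in (0 : ℝ)..τ, F s‖ ≤ |B * ((τ ^ 2 - 0 ^ 2) / 2)| := h1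
      _ = B * (τ ^ 2 / 2) := by
          rw [abs_of_nonneg (mul_nonneg hBnn (by nlinarith [sq_nonneg τ]))]; ring
  calc ‖(∫ s in (0 : ℝ)..τ, F s) + (τ ^ 2 / 2) • c - (τ ^ 2 / 2) • c‖
      = ‖∫ s in (0 : ℝ)..τ, F s‖ := by rw [add_sub_cancel_right]
    _ ≤ B * (τ ^ 2 / 2) := hmain
    _ ≤ min (3 / 2 * τ ^ 2 * M₀) (τ ^ 3 * M₁) := by
        refine le_min ?_ ?_
        · calc B * (τ ^ 2 / 2) ≤ 2 * M₀ * (τ ^ 2 / 2) := by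
                have := min_le_left (2 * M₀) (τ * M₁); nlinarith
            _ ≤ 3 / 2 * τ ^ 2 * M₀ := by nlinarith
        · calc B * (τ ^ 2 / 2) ≤ τ * M₁ * (τ ^ 2 / 2) := by
                have := min_le_right (2 * M₀) (τ * M₁); nlinarith
            _ ≤ τ ^ 3 * M₁ := by nlinarith [mul_nonneg (pow_pos hτ 3).le hM₁0]
end
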